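/- For every p, k, and w, there exists f_w(p,k) such that every graph G of tree-width less than w either contains k vertex-disjoint subgraphs each having a K_p minor, or there is a set X of at most f_w(p,k) vertices such that G - X has no K_p minor. -/

import Mathlib

open SimpleGraph

section Defs
variable {V : Type*}

/-- `G` has a `K_p` minor: `p` disjoint nonempty connected branch sets pairwise joined by edges. -/
def HasCliqueMinor (G : SimpleGraph V) (p : ℕ) : Prop :=
  ∃ B : Fin p → Set V,
    (∀ i, (B i).Nonempty) ∧
    (∀ i, (G.induce (B i)).Connected) ∧
    (Pairwise fun i j => Disjoint (B i) (B j)) ∧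
    (Pairwise fun i j => ∃ u ∈ B i, ∃ v ∈ B j, G.Adj u v)

/-- `G` contains `k` pairwise vertex-disjoint instances of a `K_p` minor. -/
def HasDisjointCliqueMinors (G : SimpleGraph V) (p k : ℕ) : Prop :=
  ∃ S : Fin k → Set V,
    (Pairwise fun i j => Disjoint (S i) (S j)) ∧
    ∀ i, HasCliqueMinor (G.induce (S i)) p

/-- `H` is a minor of `G` (branch-set / minor-model definition). -/
def HasMinor {W : Type*} (G : SimpleGraph V) (H : SimpleGraph W) : Prop :=
  ∃ B : W → Set V,
    (∀ w, (B w).Nonempty) ∧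
    (∀ w, (G.induce (B w)).Connected) ∧
    (Pairwise fun w w' => Disjoint (B w) (B w')) ∧
    (∀ w w', H.Adj w w' → ∃ u ∈ B w, ∃ v ∈ B w', G.Adj u v)

/-- `(Gt, W)` is a tree decomposition of `G`. -/
def IsTreeDecomp {T : Type*} (G : SimpleGraph V) (Gt : SimpleGraph T) (W : T → Set V) : Prop :=
  Gt.IsTree ∧
  (∀ v : V, ∃ t, v ∈ W t) ∧
  (∀ u v : V, G.Adj u v → ∃ t, u ∈ W t ∧ v ∈ W t) ∧
  (∀ v : V, (Gt.induce {t | v ∈ W t}).Connected)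

/-- `G` has tree-width `< w`, i.e. a tree decomposition with all bags of size `≤ w`. -/
def TreewidthLt (G : SimpleGraph V) (w : ℕ) : Prop :=
  ∃ (T : Type) (Gt : SimpleGraph T) (W : T → Set V),
    IsTreeDecomp G Gt W ∧ ∀ t, (W t).Finite ∧ (W t).ncard ≤ w

/-- `G` has path-width at most `w`. -/
def PathwidthLe (G : SimpleGraph V) (w : ℕ) : Prop :=
  ∃ (n : ℕ) (W : Fin (n+1) → Set V),
    (∀ v, ∃ i, v ∈ W i) ∧
    (∀ u v, G.Adj u v → ∃ i, u ∈ W i ∧ v ∈ W i) ∧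
    (∀ v (i j k : Fin (n+1)), i ≤ j → j ≤ k → v ∈ W i → v ∈ W k → v ∈ W j) ∧
    (∀ i, (W i).Finite ∧ (W i).ncard ≤ w + 1)

/-- An `X`–`Y` linkage of order `t` in `G`: `t` disjoint `X`–`Y` paths meeting all of `X ∪ Y`. -/
structure Linkage (G : SimpleGraph V) (X Y : Set V) (t : ℕ) where
  first : Fin t → V
  last : Fin t → V
  walk : ∀ i, G.Walk (first i) (last i)
  isPath : ∀ i, (walk i).IsPath
  firstMem : ∀ i, first i ∈ X
  lastMem : ∀ i, last i ∈ Y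
  innerCond : ∀ i v, v ∈ (walk i).support → v ∈ X ∪ Y → v = first i ∨ v = last i
  disjointCond : ∀ i j, i ≠ j → ∀ v, v ∈ (walk i).support → v ∉ (walk j).support
  coverX : ∀ x ∈ X, ∃ i, first i = x
  coverY : ∀ y ∈ Y, ∃ i, last i = y

/-- The collection of vertex sets of the paths of a linkage. -/
def Linkage.pathSets {G : SimpleGraph V} {X Y : Set V} {t : ℕ} (L : Linkage G X Y t) :
    Set (Set V) := {s | ∃ i, s = {v | v ∈ (L.walk i).support}}

/-- A linkage is singular if it covers all of `V(G)` and `G` has no other `X`–`Y` linkage. -/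
def Linkage.Singular {G : SimpleGraph V} {X Y : Set V} {t : ℕ} (L : Linkage G X Y t) : Prop :=
  (∀ v : V, ∃ i, v ∈ (L.walk i).support) ∧
  ∀ (t' : ℕ) (L' : Linkage G X Y t'), L'.pathSets = L.pathSets

/-- A cycle in `G`. -/
structure CycleIn (G : SimpleGraph V) where
  base : V
  walk : G.Walk base base
  isCycle : walk.IsCycle

def CycleIn.verts {G : SimpleGraph V} (C : CycleIn G) : Set V := {v | v ∈ C.walk.support}

/-- Concentric cycles: pairwise disjoint, and each middle cycle separates inner from outer. -/
def Concentric {G : SimpleGraph V} {s : ℕ} (C : Fin s → CycleIn G) : Prop :=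
  (Pairwise fun i j => Disjoint (C i).verts (C j).verts) ∧
  ∀ (i j k : Fin s), i < j → j < k →
    ∀ (u v : V), u ∈ (C i).verts → v ∈ (C k).verts →
      ∀ w : G.Walk u v, ∃ x ∈ (C j).verts, x ∈ w.support

/-- A walk is orthogonal to the (vertex sets of) cycles `D 1, …, D s`: it meets each `D i` in a
nonempty contiguous segment, and these segments appear in order (or in reverse order). -/
def WalkOrthS {G : SimpleGraph V} {x y : V} (w : G.Walk x y) {s : ℕ}
    (D : Fin s → Set V) : Prop :=
  ∃ a b : Fin s → ℕ,
    (∀ i, a i ≤ b i) ∧ (∀ i, b i < w.support.length) ∧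
    ((∀ i j : Fin s, i < j → b i < a j) ∨ (∀ i j : Fin s, i < j → b j < a i)) ∧
    (∀ (i : Fin s) (n : ℕ) (hn : n < w.support.length),
      w.support.get ⟨n, hn⟩ ∈ D i ↔ (a i ≤ n ∧ n ≤ b i))

/-- `v` is the first vertex of the list `l` lying in `S`. -/
def firstIn (l : List V) (S : Set V) (v : V) : Prop :=
  ∃ l₁ l₂, l = l₁ ++ v :: l₂ ∧ v ∈ S ∧ ∀ u ∈ l₁, u ∉ S

/-- An `A`–`L` comb (`A` playing the role of the vertex set of the subgraph `H`): disjoint paths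
starting in `A` (with no further vertex in `A`) and ending on `⋃ L`, such that the set of
endvertices of the `(Q,H)`-segments of the paths of `L` equals the set of last vertices. -/
structure Comb {G : SimpleGraph V} {X Y : Set V} {t : ℕ}
    (A : Set V) (L : Linkage G X Y t) (m : ℕ) where
  first : Fin m → V
  last : Fin m → V
  walk : ∀ i, G.Walk (first i) (last i)
  isPath : ∀ i, (walk i).IsPath
  firstMem : ∀ i, first i ∈ A
  onlyFirstInA : ∀ i v, v ∈ (walk i).support → v ∈ A → v = first i
  endsOnL : ∀ i, ∃ j, last i ∈ (L.walk j).support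
  disjointCond : ∀ i j, i ≠ j → ∀ v, v ∈ (walk i).support → v ∉ (walk j).support
  combCond :
    {v | ∃ j, firstIn ((L.walk j).support) ((⋃ i, {u | u ∈ (walk i).support}) ∪ A) v ∨
          firstIn ((L.walk j).support).reverse ((⋃ i, {u | u ∈ (walk i).support}) ∪ A) v}
      = Set.range last

/-- `G` is `m`-connected. -/
def IsKConnected (G : SimpleGraph V) (m : ℕ) : Prop :=
  m < Nat.card V ∧ ∀ S : Set V, S.Finite → S.ncard < m → (G.induce Sᶜ).Connected

end Defs

section Fans

/-- Adjacency of the fan `F(l,n)`: the ladder `L(l)` on the `u`- and `v`-paths together with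
`n` independent vertices joined to all of the `v`-path. -/
def fanAdj (l n : ℕ) : (Fin l ⊕ (Fin l ⊕ Fin n)) → (Fin l ⊕ (Fin l ⊕ Fin n)) → Prop
  | Sum.inl i, Sum.inl j => i.val + 1 = j.val
  | Sum.inl i, Sum.inr (Sum.inl j) => i = j
  | Sum.inr (Sum.inl i), Sum.inr (Sum.inl j) => i.val + 1 = j.val
  | Sum.inr (Sum.inl _), Sum.inr (Sum.inr _) => True
  | _, _ => False

/-- The fan `F(l, n)`. -/
def fanGraph (l n : ℕ) : SimpleGraph (Fin l ⊕ (Fin l ⊕ Fin n)) :=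
  SimpleGraph.fromRel (fanAdj l n)

/-- The `n × n` grid graph. -/
def gridGraph (n : ℕ) : SimpleGraph (Fin n × Fin n) :=
  SimpleGraph.fromRel (fun a b =>
    (a.1 = b.1 ∧ a.2.val + 1 = b.2.val) ∨ (a.2 = b.2 ∧ a.1.val + 1 = b.1.val))

end Fans

section Embed
variable {V : Type*} [Fintype V] [DecidableEq V]

/-- Reversal of darts, as a permutation. -/
def dartRev (G : SimpleGraph V) : Equiv.Perm G.Dart :=
  ⟨SimpleGraph.Dart.symm, SimpleGraph.Dart.symm,
    fun d => SimpleGraph.Dart.symm_symm d, fun d => SimpleGraph.Dart.symm_symm d⟩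

/-- The Euler characteristic of the (orientable) combinatorial embedding of `G` given by the
rotation system `ρ`: `n - e + f`, corrected so that all components live in one surface. -/
noncomputable def eulerChar (G : SimpleGraph V) [DecidableRel G.Adj]
    (ρ : Equiv.Perm G.Dart) : ℤ :=
  (Fintype.card V : ℤ) - (G.edgeFinset.card : ℤ)
    + (Nat.card (Quotient (MulAction.orbitRel
        (Subgroup.zpowers ((dartRev G).trans ρ)) G.Dart)) : ℤ)
    - 2 * ((Nat.card G.ConnectedComponent : ℤ) - 1)

/-- `G` is embeddable in an (orientable) surface of Euler characteristic `χ`: it has a rotation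
system (a permutation of the darts preserving tails) whose Euler characteristic is at least `χ`. -/
def EmbeddableEuler (G : SimpleGraph V) [DecidableRel G.Adj] (χ : ℤ) : Prop :=
  ∃ ρ : Equiv.Perm G.Dart, (∀ d : G.Dart, (ρ d).toProd.1 = d.toProd.1) ∧ χ ≤ eulerChar G ρ

end Embed



section ErdosPosaAux

section TreeAux
variable {T : Type*} {Gt : SimpleGraph T}

lemma tree_path_unique (hT : Gt.IsTree) {a b : T} {p q : Gt.Walk a b}
    (hp : p.IsPath) (hq : q.IsPath) : p = q := by
  have := SimpleGraph.isAcyclic_iff_path_unique.mp hT.IsAcyclic (v := a) (w := b) ⟨p, hp⟩ ⟨q, hq⟩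
  exact congrArg Subtype.val this

/-- T1': any path in a tree has length equal to the distance between its endpoints. -/
lemma tree_path_length (hT : Gt.IsTree) {a b : T} {p : Gt.Walk a b} (hp : p.IsPath) :
    p.length = Gt.dist a b := by
  obtain ⟨q, hq, hlen⟩ := Reachable.exists_path_of_dist (p.reachable)
  rw [tree_path_unique hT hp hq, hlen]

/-- SPLIT: if `v` lies on a path from `a` to `b` in a tree, distances add up. -/
lemma tree_dist_split (hT : Gt.IsTree) {a b v : T} {p : Gt.Walk a b} (hp : p.IsPath)
    (hv : v ∈ p.support) : Gt.dist a v + Gt.dist v b = Gt.dist a b := by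
  classical
  have h1 := hp.takeUntil hv
  have h2 := hp.dropUntil hv
  have := SimpleGraph.Walk.take_spec p hv
  have hl : (p.takeUntil v hv).length + (p.dropUntil v hv).length = p.length := by
    rw [← SimpleGraph.Walk.length_append, this]
  rw [← tree_path_length hT h1, ← tree_path_length hT h2, hl, tree_path_length hT hp]

lemma tree_dist_le_of_mem (hT : Gt.IsTree) {a b v : T} {p : Gt.Walk a b} (hp : p.IsPath)
    (hv : v ∈ p.support) : Gt.dist a v ≤ Gt.dist a b := by
  have := tree_dist_split hT hp hv; omega

/-- T2: adjacent vertices have different distances to any root in a tree. -/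
lemma tree_adj_dist_ne (hT : Gt.IsTree) {r u z : T} (h : Gt.Adj u z) :
    Gt.dist r u ≠ Gt.dist r z := by
  intro heq
  obtain ⟨p, hp, hlen⟩ := Reachable.exists_path_of_dist (hT.isConnected.preconnected r u)
  by_cases hz : z ∈ p.support
  · have := tree_dist_split hT hp hz
    have hzu : Gt.dist z u = 0 := by omega
    have : z = u := Reachable.dist_eq_zero_iff (hT.isConnected.preconnected z u) |>.mp hzu
    exact h.ne this.symm
  · have hq : (SimpleGraph.Walk.cons h.symm p.reverse).IsPath := by
      apply hp.reverse.cons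
      simpa using hz
    have := tree_path_length hT hq.reverse
    simp [SimpleGraph.Walk.length_reverse] at this
    omega

/-- T3: unique parent. -/
lemma tree_parent_unique (hT : Gt.IsTree) {r u w z : T} (hu : Gt.Adj u z) (hw : Gt.Adj w z)
    (hdu : Gt.dist r u + 1 = Gt.dist r z) (hdw : Gt.dist r w + 1 = Gt.dist r z) : u = w := by
  obtain ⟨p, hp, hlp⟩ := Reachable.exists_path_of_dist (hT.isConnected.preconnected r u)
  obtain ⟨q, hq, hlq⟩ := Reachable.exists_path_of_dist (hT.isConnected.preconnected r w)
  have hzp : z ∉ p.support := by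
    intro hz
    have := tree_dist_split hT hp hz; omega
  have hzq : z ∉ q.support := by
    intro hz
    have := tree_dist_split hT hq hz; omega
  have hp' : (SimpleGraph.Walk.cons hu.symm p.reverse).IsPath := by
    apply hp.reverse.cons; simpa using hzp
  have hq' : (SimpleGraph.Walk.cons hw.symm q.reverse).IsPath := by
    apply hq.reverse.cons; simpa using hzq
  have heq := tree_path_unique hT hp'.reverse hq'.reverse
  have heq2 := congrArg SimpleGraph.Walk.reverse heq
  simp only [SimpleGraph.Walk.reverse_reverse] at heq2
  have hs := congrArg SimpleGraph.Walk.support heq2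
  simp only [SimpleGraph.Walk.support_cons] at hs
  have htail : p.reverse.support = q.reverse.support := by
    exact (List.cons.injEq _ _ _ _ ▸ hs).2
  have h1 : p.reverse.support.head (by simp) = u := SimpleGraph.Walk.head_support _
  have h2 : q.reverse.support.head (by simp) = w := SimpleGraph.Walk.head_support _
  rw [← h1, ← h2]
  congr 1
end TreeAux

section TreeAux2
variable {T : Type*} {Gt : SimpleGraph T}

lemma walk_support_getElem {a b : T} (p : Gt.Walk a b) :
    ∀ i (h : i < p.support.length), p.support[i] = p.getVert i := by
  induction p with
  | nil => intro i h; simp at h; subst h; simp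
  | cons hadj q ih =>
    intro i h
    match i with
    | 0 => simp
    | (i+1) =>
      simp only [SimpleGraph.Walk.support_cons, SimpleGraph.Walk.getVert_cons_succ]
      rw [List.getElem_cons_succ]
      exact ih i (by simpa [SimpleGraph.Walk.length_support] using
        (by simpa [SimpleGraph.Walk.length_support] using h : i + 1 < q.support.length + 1))

lemma walk_getVert_mem_support {a b : T} (p : Gt.Walk a b) {i : ℕ} (h : i ≤ p.length) :
    p.getVert i ∈ p.support := by
  rw [SimpleGraph.Walk.mem_support_iff_exists_getVert]
  exact ⟨i, rfl, h⟩

lemma path_getVert_inj {a b : T} {p : Gt.Walk a b} (hp : p.IsPath) {i j : ℕ}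
    (hi : i ≤ p.length) (hj : j ≤ p.length) (h : p.getVert i = p.getVert j) : i = j := by
  have hnd := hp.support_nodup
  have hi' : i < p.support.length := by rw [SimpleGraph.Walk.length_support]; omega
  have hj' : j < p.support.length := by rw [SimpleGraph.Walk.length_support]; omega
  have : p.support[i] = p.support[j] := by
    rw [walk_support_getElem p i hi', walk_support_getElem p j hj', h]
  exact List.Nodup.getElem_inj_iff hnd |>.mp this
end TreeAux2

section TreeAux3
variable {T : Type*} {Gt : SimpleGraph T}

open Classical in
noncomputable def treePar (Gt : SimpleGraph T) (r z : T) : T :=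
  if h : ∃ u, Gt.Adj u z ∧ Gt.dist r u + 1 = Gt.dist r z then h.choose else z

lemma treePar_exists (hT : Gt.IsTree) {r z : T} (h0 : 0 < Gt.dist r z) :
    ∃ u, Gt.Adj u z ∧ Gt.dist r u + 1 = Gt.dist r z := by
  obtain ⟨q, hq, hlen⟩ := Reachable.exists_path_of_dist (hT.isConnected.preconnected z r)
  rw [SimpleGraph.dist_comm] at hlen
  cases q with
  | nil => rw [← hlen] at h0; simp at h0
  | cons hadj q' =>
    rename_i u
    refine ⟨u, hadj.symm, ?_⟩
    have hq' : q'.IsPath := hq.of_cons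
    have : q'.reverse.length = Gt.dist r u := tree_path_length hT hq'.reverse
    rw [SimpleGraph.Walk.length_reverse] at this
    simp only [SimpleGraph.Walk.length_cons] at hlen
    omega

lemma treePar_spec (hT : Gt.IsTree) {r z : T} (h0 : 0 < Gt.dist r z) :
    Gt.Adj (treePar Gt r z) z ∧ Gt.dist r (treePar Gt r z) + 1 = Gt.dist r z := by
  rw [treePar]
  rw [dif_pos (treePar_exists hT h0)]
  exact (treePar_exists hT h0).choose_spec

lemma treePar_eq (hT : Gt.IsTree) {r u z : T} (h : Gt.Adj u z)
    (hd : Gt.dist r u + 1 = Gt.dist r z) : treePar Gt r z = u := by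
  have h0 : 0 < Gt.dist r z := by omega
  exact tree_parent_unique hT (treePar_spec hT h0).1 h (treePar_spec hT h0).2 hd

/-- T4: along a path starting at a dist-minimal vertex of `S` and staying in `S`,
distances to the root increase by one at each step. -/
lemma tree_ascend (hT : Gt.IsTree) {r : T} {S : Set T} {t x : T}
    (hmin : ∀ v ∈ S, Gt.dist r t ≤ Gt.dist r v) {Q : Gt.Walk t x} (hQ : Q.IsPath)
    (hsup : ∀ v ∈ Q.support, v ∈ S) :
    ∀ i, i ≤ Q.length → Gt.dist r (Q.getVert i) = Gt.dist r t + i := by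
  intro i
  induction i using Nat.strong_induction_on with
  | _ i ih =>
    match i with
    | 0 => intro _; simp
    | (i+1) =>
      intro hle
      have hia := ih i (by omega) (by omega)
      have hadj : Gt.Adj (Q.getVert i) (Q.getVert (i+1)) := Q.adj_getVert_succ (by omega)
      have hd1 : Gt.dist r (Q.getVert (i+1)) ≤ Gt.dist r (Q.getVert i) + 1 := by
        calc Gt.dist r (Q.getVert (i+1)) ≤ Gt.dist r (Q.getVert i)
              + Gt.dist (Q.getVert i) (Q.getVert (i+1)) :=
            SimpleGraph.Connected.dist_triangle hT.isConnected
          _ ≤ Gt.dist r (Q.getVert i) + 1 := by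
            have := SimpleGraph.dist_le hadj.toWalk
            simp at this; omega
      have hd2 : Gt.dist r (Q.getVert i) ≤ Gt.dist r (Q.getVert (i+1)) + 1 := by
        calc Gt.dist r (Q.getVert i) ≤ Gt.dist r (Q.getVert (i+1))
              + Gt.dist (Q.getVert (i+1)) (Q.getVert i) :=
            SimpleGraph.Connected.dist_triangle hT.isConnected
          _ ≤ Gt.dist r (Q.getVert (i+1)) + 1 := by
            have := SimpleGraph.dist_le hadj.symm.toWalk
            simp at this; omega
      have hne := tree_adj_dist_ne (r := r) hT hadj
      rcases (by omega : Gt.dist r (Q.getVert (i+1)) = Gt.dist r (Q.getVert i) + 1 ∨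
          Gt.dist r (Q.getVert i) = Gt.dist r (Q.getVert (i+1)) + 1) with hcase | hcase
      · omega
      · -- descent: contradiction
        exfalso
        rcases Nat.eq_zero_or_pos i with hi0 | hipos
        · subst hi0
          have hmem : Q.getVert 1 ∈ S := hsup _ (walk_getVert_mem_support Q (by omega))
          have := hmin _ hmem
          simp only [SimpleGraph.Walk.getVert_zero] at hcase hia
          norm_num at hcase
          omega
        · obtain ⟨i', rfl⟩ : ∃ i', i = i' + 1 := ⟨i - 1, by omega⟩
          have hic := ih i' (by omega) (by omega)
          have hadj' : Gt.Adj (Q.getVert i') (Q.getVert (i'+1)) := Q.adj_getVert_succ (by omega)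
          have heq : Q.getVert (i'+1+1) = Q.getVert i' := by
            apply tree_parent_unique hT (r := r) (hdu := ?_) (hdw := ?_)
            · exact hadj.symm
            · exact hadj'
            · omega
            · omega
          have := path_getVert_inj hQ (by omega : i' + 1 + 1 ≤ Q.length)
            (by omega : i' ≤ Q.length) heq
          omega

/-- ANCS: ancestors of `x` within a connected set `S` up to its dist-minimal vertex `t`. -/
lemma tree_ancestors (hT : Gt.IsTree) {r : T} {S : Set T} {t x : T}
    (hmin : ∀ v ∈ S, Gt.dist r t ≤ Gt.dist r v) (hx : x ∈ S)
    (hw : ∃ w : Gt.Walk t x, ∀ v ∈ w.support, v ∈ S) :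
    (∀ j ≤ Gt.dist r x - Gt.dist r t, (treePar Gt r)^[j] x ∈ S) ∧
      (treePar Gt r)^[Gt.dist r x - Gt.dist r t] x = t := by
  classical
  obtain ⟨w, hwsup⟩ := hw
  set Q := w.bypass with hQdef
  have hQ : Q.IsPath := w.bypass_isPath
  have hQsup : ∀ v ∈ Q.support, v ∈ S := fun v hv => hwsup v (w.support_bypass_subset hv)
  have hasc := tree_ascend hT hmin hQ hQsup
  have hxlen : Gt.dist r x = Gt.dist r t + Q.length := by
    have := hasc Q.length le_rfl
    rwa [SimpleGraph.Walk.getVert_length] at this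
  have hsub : Gt.dist r x - Gt.dist r t = Q.length := by omega
  rw [hsub]
  have key : ∀ j ≤ Q.length, (treePar Gt r)^[j] x = Q.getVert (Q.length - j) := by
    intro j
    induction j with
    | zero => intro _; simpa using (SimpleGraph.Walk.getVert_length Q).symm
    | succ j ihj =>
      intro hj
      rw [Function.iterate_succ_apply', ihj (by omega)]
      have h1 : Q.length - j = (Q.length - (j+1)) + 1 := by omega
      have hadj : Gt.Adj (Q.getVert (Q.length - (j+1))) (Q.getVert (Q.length - j)) := by
        rw [h1]; exact Q.adj_getVert_succ (by omega)
      apply treePar_eq hT hadj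
      rw [hasc _ (by omega), hasc _ (by omega)]
      omega
  constructor
  · intro j hj
    rw [key j hj]
    exact hQsup _ (walk_getVert_mem_support Q (by omega))
  · rw [key Q.length le_rfl]
    simpa using rfl

/-- KEY: if two connected sets share a vertex and the dist-minimal vertex of the second is
at least as close to the root, then the dist-minimal vertex of the first lies in the second. -/
lemma tree_key (hT : Gt.IsTree) {r : T} {S₁ S₂ : Set T} {t₁ t₂ x : T}
    (hmin₁ : ∀ v ∈ S₁, Gt.dist r t₁ ≤ Gt.dist r v)
    (hmin₂ : ∀ v ∈ S₂, Gt.dist r t₂ ≤ Gt.dist r v)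
    (hx₁ : x ∈ S₁) (hx₂ : x ∈ S₂)
    (hw₁ : ∃ w : Gt.Walk t₁ x, ∀ v ∈ w.support, v ∈ S₁)
    (hw₂ : ∃ w : Gt.Walk t₂ x, ∀ v ∈ w.support, v ∈ S₂)
    (hle : Gt.dist r t₂ ≤ Gt.dist r t₁) : t₁ ∈ S₂ := by
  have h₁ := (tree_ancestors hT hmin₁ hx₁ hw₁).2
  have h₂ := (tree_ancestors hT hmin₂ hx₂ hw₂).1
  rw [← h₁]
  apply h₂
  have := hmin₁ x hx₁
  omega
end TreeAux3

lemma pairwise_disjoint_fin_cons {α : Type*} {n : ℕ} {g : Fin n → Set α} {C : Set α}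
    (hg : Pairwise fun i j => Disjoint (g i) (g j)) (hC : ∀ i, Disjoint C (g i)) :
    Pairwise fun i j => Disjoint ((Fin.cons C g : Fin (n+1) → Set α) i) ((Fin.cons C g : Fin (n+1) → Set α) j) := by
  intro i j hij
  induction i using Fin.cases with
  | zero =>
    induction j using Fin.cases with
    | zero => exact absurd rfl hij
    | succ j => simpa using hC j
  | succ i =>
    induction j using Fin.cases with
    | zero => simpa using (hC i).symm
    | succ j =>
      simpa using hg (fun h => hij (congrArg Fin.succ h))

/-- Erdős–Pósa for finite connected subsets ("subtrees") of a tree. -/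
lemma tree_EP {T : Type} (Gt : SimpleGraph T) (hT : Gt.IsTree) (k : ℕ) (F : Set (Set T))
    (hmem : ∀ C ∈ F, C.Finite ∧ C.Nonempty ∧
      (∀ x ∈ C, ∀ y ∈ C, ∃ w : Gt.Walk x y, ∀ v ∈ w.support, v ∈ C)) :
    (∃ g : Fin k → Set T, (∀ i, g i ∈ F) ∧ (Pairwise fun i j => Disjoint (g i) (g j))) ∨
    (∃ N : Finset T, N.card < k ∧ ∀ C ∈ F, ∃ s ∈ N, s ∈ C) := by
  classical
  induction k generalizing F with
  | zero =>
    left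
    exact ⟨Fin.elim0, fun i => i.elim0, fun i => i.elim0⟩
  | succ k ih =>
    by_cases hFne : F.Nonempty
    swap
    · right
      refine ⟨∅, by simp, fun C hC => absurd ⟨C, hC⟩ hFne⟩
    have hne : Nonempty T := hT.isConnected.nonempty
    obtain ⟨r⟩ := hne
    -- dist-minimal vertex of each member
    have htop : ∀ C (h : C ∈ F), ∃ t ∈ C, ∀ x ∈ C, Gt.dist r t ≤ Gt.dist r x := by
      intro C h
      exact Set.exists_min_image C (fun x => Gt.dist r x) (hmem C h).1 (hmem C h).2.1
    choose top htopmem htopmin using htop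
    by_cases hbdd : ∃ Bd : ℕ, ∀ C (h : C ∈ F), Gt.dist r (top C h) ≤ Bd
    · -- bounded: extremal argument
      obtain ⟨Bd, hBd⟩ := hbdd
      set D : Set ℕ := {n | ∃ C, ∃ h : C ∈ F, Gt.dist r (top C h) = n} with hD
      have hDne : D.Nonempty := by
        obtain ⟨C, hC⟩ := hFne
        exact ⟨_, C, hC, rfl⟩
      have hDfin : D.Finite := by
        apply (Set.finite_Iic Bd).subset
        rintro n ⟨C, h, rfl⟩
        exact hBd C h
      obtain ⟨n₀, hn₀D, hn₀max⟩ := Set.exists_max_image D id hDfin hDne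
      obtain ⟨C₁, hC₁F, hC₁eq⟩ := hn₀D
      set t₁ := top C₁ hC₁F with ht₁
      have hmax : ∀ C (h : C ∈ F), Gt.dist r (top C h) ≤ Gt.dist r t₁ := by
        intro C h
        rw [hC₁eq]
        exact hn₀max _ ⟨C, h, rfl⟩
      set F' : Set (Set T) := {C ∈ F | t₁ ∉ C} with hF'
      have hmem' : ∀ C ∈ F', C.Finite ∧ C.Nonempty ∧
          (∀ x ∈ C, ∀ y ∈ C, ∃ w : Gt.Walk x y, ∀ v ∈ w.support, v ∈ C) :=
        fun C hC => hmem C hC.1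
      -- members of F meeting C₁ contain t₁
      have hkey : ∀ C (h : C ∈ F), ¬ Disjoint C₁ C → t₁ ∈ C := by
        intro C h hdisj
        rw [Set.not_disjoint_iff] at hdisj
        obtain ⟨x, hx₁, hx₂⟩ := hdisj
        exact tree_key hT (htopmin C₁ hC₁F) (htopmin C h) hx₁ hx₂
          ((hmem C₁ hC₁F).2.2 t₁ (htopmem C₁ hC₁F) x hx₁)
          ((hmem C h).2.2 (top C h) (htopmem C h) x hx₂)
          (hmax C h)
      rcases ih F' hmem' with ⟨g, hgF, hgdisj⟩ | ⟨N, hNcard, hNhits⟩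
      · left
        refine ⟨Fin.cons C₁ g, ?_, ?_⟩
        · intro i
          induction i using Fin.cases with
          | zero => simpa using hC₁F
          | succ i => simpa using (hgF i).1
        · apply pairwise_disjoint_fin_cons hgdisj
          intro i
          by_contra hdisj
          exact (hgF i).2 (hkey (g i) (hgF i).1 (fun h => hdisj h))
      · right
        refine ⟨insert t₁ N, ?_, ?_⟩
        · calc (insert t₁ N).card ≤ N.card + 1 := Finset.card_insert_le _ _
            _ < k + 1 := by omega
        · intro C hC
          by_cases ht : t₁ ∈ C
          · exact ⟨t₁, Finset.mem_insert_self _ _, ht⟩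
          · obtain ⟨s, hsN, hsC⟩ := hNhits C ⟨hC, ht⟩
            exact ⟨s, Finset.mem_insert_of_mem hsN, hsC⟩
    · -- unbounded: greedily build k+1 disjoint members
      push_neg at hbdd
      left
      have main : ∀ j : ℕ, ∃ g : Fin j → Set T, (∀ i, g i ∈ F) ∧
          (Pairwise fun i j => Disjoint (g i) (g j)) := by
        intro j
        induction j with
        | zero => exact ⟨Fin.elim0, fun i => i.elim0, fun i => i.elim0⟩
        | succ j ihj =>
          obtain ⟨g, hgF, hgdisj⟩ := ihj
          have hUfin : (⋃ i, g i).Finite :=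
            Set.finite_iUnion (fun i => (hmem _ (hgF i)).1)
          set Bd := hUfin.toFinset.sup (fun x => Gt.dist r x) with hBddef
          obtain ⟨C, hCF, hCgt⟩ := hbdd Bd
          refine ⟨Fin.cons C g, ?_, ?_⟩
          · intro i
            induction i using Fin.cases with
            | zero => simpa using hCF
            | succ i => simpa using hgF i
          · apply pairwise_disjoint_fin_cons hgdisj
            intro i
            rw [Set.disjoint_left]
            intro x hxC hxg
            have hx : x ∈ ⋃ i, g i := Set.mem_iUnion.mpr ⟨i, hxg⟩
            have h1 : Gt.dist r x ≤ Bd := by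
              apply Finset.le_sup
              rwa [Set.Finite.mem_toFinset]
            have h2 := htopmin C hCF x hxC
            omega
      exact main (k+1)

section WConnAux
variable {V : Type*} {G : SimpleGraph V}

lemma lift_walk {A : Set V} : ∀ {x y : V} (w : G.Walk x y)
    (hw : ∀ v ∈ w.support, v ∈ A) (hx : x ∈ A) (hy : y ∈ A),
    ∃ ω : (G.induce A).Walk ⟨x, hx⟩ ⟨y, hy⟩, ω.support.map Subtype.val = w.support := by
  intro x y w
  induction w with
  | nil =>
    intro hw hx hy
    exact ⟨SimpleGraph.Walk.nil, by simp⟩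
  | cons hadj q ihq =>
    rename_i a b c
    intro hw hx hy
    have hb : b ∈ A := hw b (by simp [SimpleGraph.Walk.support_cons])
    obtain ⟨ω, hω⟩ := ihq (fun v hv => hw v (by simp [SimpleGraph.Walk.support_cons, hv])) hb hy
    refine ⟨SimpleGraph.Walk.cons (show (G.induce A).Adj ⟨a, hx⟩ ⟨b, hb⟩ from hadj) ω, ?_⟩
    simp [SimpleGraph.Walk.support_cons, hω]

lemma wconn_of_connected {A : Set V} (h : (G.induce A).Connected) :
    ∀ x ∈ A, ∀ y ∈ A, ∃ w : G.Walk x y, ∀ v ∈ w.support, v ∈ A := by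
  intro x hx y hy
  obtain ⟨w0⟩ := h.preconnected ⟨x, hx⟩ ⟨y, hy⟩
  refine ⟨w0.map (SimpleGraph.Embedding.induce A).toHom, ?_⟩
  intro v hv
  change v ∈ (w0.map (SimpleGraph.Embedding.induce A).toHom).support at hv
  rw [SimpleGraph.Walk.support_map, List.mem_map] at hv
  obtain ⟨a, _, rfl⟩ := hv
  exact a.2

lemma connected_of_wconn {A : Set V} (hA : A.Nonempty)
    (h : ∀ x ∈ A, ∀ y ∈ A, ∃ w : G.Walk x y, ∀ v ∈ w.support, v ∈ A) :
    (G.induce A).Connected := by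
  have : Nonempty ↥A := hA.to_subtype
  refine ⟨fun a b => ?_⟩
  obtain ⟨w, hw⟩ := h a a.2 b b.2
  obtain ⟨ω, -⟩ := lift_walk w hw a.2 b.2
  exact ⟨ω.copy (by simp) (by simp)⟩

end WConnAux

section HCM
variable {V : Type*}

lemma hcm_iff (G : SimpleGraph V) (S : Set V) (p : ℕ) :
    HasCliqueMinor (G.induce S) p ↔
    ∃ B : Fin p → Set V, (∀ i, B i ⊆ S) ∧ (∀ i, (B i).Nonempty) ∧
      (∀ i, ∀ x ∈ B i, ∀ y ∈ B i, ∃ w : G.Walk x y, ∀ v ∈ w.support, v ∈ B i) ∧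
      (Pairwise fun i j => Disjoint (B i) (B j)) ∧
      (Pairwise fun i j => ∃ u ∈ B i, ∃ v ∈ B j, G.Adj u v) := by
  constructor
  · rintro ⟨B', hne, hconn, hdisj, hadj⟩
    refine ⟨fun i => Subtype.val '' B' i, ?_, ?_, ?_, ?_, ?_⟩
    · intro i x hx
      obtain ⟨a, -, rfl⟩ := hx
      exact a.2
    · intro i; exact (hne i).image _
    · intro i x hx y hy
      obtain ⟨a, ha, rfl⟩ := hx
      obtain ⟨b, hb, rfl⟩ := hy
      obtain ⟨w, hw⟩ := wconn_of_connected (hconn i) a ha b hb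
      refine ⟨w.map (SimpleGraph.Embedding.induce S).toHom, ?_⟩
      intro v hv
      change v ∈ (w.map (SimpleGraph.Embedding.induce S).toHom).support at hv
      rw [SimpleGraph.Walk.support_map, List.mem_map] at hv
      obtain ⟨m, hm, rfl⟩ := hv
      exact ⟨m, hw m hm, rfl⟩
    · intro i j hij
      exact (Set.disjoint_image_iff Subtype.val_injective).mpr (hdisj hij)
    · intro i j hij
      obtain ⟨u, hu, v, hv, huv⟩ := hadj hij
      exact ⟨u.1, ⟨u, hu, rfl⟩, v.1, ⟨v, hv, rfl⟩, huv⟩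
  · rintro ⟨B, hsub, hne, hwconn, hdisj, hadj⟩
    refine ⟨fun i => Subtype.val ⁻¹' B i, ?_, ?_, ?_, ?_⟩
    · intro i
      obtain ⟨x, hx⟩ := hne i
      exact ⟨⟨x, hsub i hx⟩, hx⟩
    · intro i
      apply connected_of_wconn
      · obtain ⟨x, hx⟩ := hne i
        exact ⟨⟨x, hsub i hx⟩, hx⟩
      · rintro ⟨x, hxS⟩ hx ⟨y, hyS⟩ hy
        obtain ⟨w, hw⟩ := hwconn i x hx y hy
        obtain ⟨ω, hω⟩ := lift_walk (A := S) w (fun v hv => hsub i (hw v hv)) hxS hyS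
        refine ⟨ω, ?_⟩
        intro m hm
        have : m.1 ∈ w.support := by
          rw [← hω]
          exact List.mem_map_of_mem hm
        exact hw m.1 this
    · intro i j hij
      exact Disjoint.preimage _ (hdisj hij)
    · intro i j hij
      obtain ⟨u, hu, v, hv, huv⟩ := hadj hij
      exact ⟨⟨u, hsub i hu⟩, hu, ⟨v, hsub j hv⟩, hv, huv⟩
end HCM

section Nice
variable {V : Type*} {G : SimpleGraph V}

lemma mem_support_append' {x y z v : V} {p : G.Walk x y} {q : G.Walk y z}
    (h : v ∈ (p.append q).support) : v ∈ p.support ∨ v ∈ q.support := by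
  rw [SimpleGraph.Walk.support_append] at h
  rcases List.mem_append.mp h with h | h
  · exact Or.inl h
  · exact Or.inr (List.mem_of_mem_tail h)

lemma exists_nice (G : SimpleGraph V) (p : ℕ) (hp : 0 < p) (S : Set V)
    (h : HasCliqueMinor (G.induce S) p) :
    ∃ A : Set V, A ⊆ S ∧ A.Finite ∧ A.Nonempty ∧
      (∀ x ∈ A, ∀ y ∈ A, ∃ w : G.Walk x y, ∀ v ∈ w.support, v ∈ A) ∧
      HasCliqueMinor (G.induce A) p := by
  classical
  obtain ⟨B, hsub, hne, hwconn, hdisj, hadj⟩ := (hcm_iff G S p).mp h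
  choose c hc using hne
  have hpair : ∀ i j : Fin p, ∃ u v, u ∈ B i ∧ v ∈ B j ∧ (i ≠ j → G.Adj u v) := by
    intro i j
    by_cases hij : i ≠ j
    · obtain ⟨u, hu, v, hv, huv⟩ := hadj hij
      exact ⟨u, v, hu, hv, fun _ => huv⟩
    · exact ⟨c i, c j, hc i, hc j, fun h' => absurd h' hij⟩
  choose uu vv huu hvv huvadj using hpair
  -- terminal sets
  set Ter : Fin p → Set V := fun i => {c i} ∪ (⋃ j, {uu i j}) ∪ (⋃ j, {vv j i}) with hTer
  have hTerB : ∀ i, Ter i ⊆ B i := by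
    intro i x hx
    rcases hx with (hx | hx) | hx
    · rw [Set.mem_singleton_iff] at hx; exact hx ▸ hc i
    · obtain ⟨j, hj⟩ := Set.mem_iUnion.mp hx
      rw [Set.mem_singleton_iff] at hj; exact hj ▸ huu i j
    · obtain ⟨j, hj⟩ := Set.mem_iUnion.mp hx
      rw [Set.mem_singleton_iff] at hj; exact hj ▸ hvv j i
  have hTerFin : ∀ i, (Ter i).Finite := by
    intro i
    apply Set.Finite.union
    apply Set.Finite.union
    · exact Set.finite_singleton _
    · exact Set.finite_iUnion (fun j => Set.finite_singleton _)
    · exact Set.finite_iUnion (fun j => Set.finite_singleton _)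
  have hcTer : ∀ i, c i ∈ Ter i := fun i => Or.inl (Or.inl rfl)
  have huuTer : ∀ i j, uu i j ∈ Ter i := fun i j =>
    Or.inl (Or.inr (Set.mem_iUnion.mpr ⟨j, rfl⟩))
  have hvvTer : ∀ i j, vv i j ∈ Ter j := fun i j =>
    Or.inr (Set.mem_iUnion.mpr ⟨i, rfl⟩)
  -- walks from the pivot c i to points of B i, inside B i
  have hwk : ∀ (i : Fin p) (x : V), x ∈ B i →
      ∃ w : G.Walk (c i) x, ∀ v ∈ w.support, v ∈ B i :=
    fun i x hx => hwconn i (c i) (hc i) x hx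
  choose wk hwkmem using hwk
  set tt : Fin p → V → Set V := fun i x =>
    if hx : x ∈ B i then {v | v ∈ (wk i x hx).support} else ∅ with htt
  have httfin : ∀ i x, (tt i x).Finite := by
    intro i x
    rw [htt]
    dsimp only
    split
    · exact List.finite_toSet _
    · exact Set.finite_empty
  have httB : ∀ i x, tt i x ⊆ B i := by
    intro i x v hv
    rw [htt] at hv; dsimp only at hv
    split at hv
    · exact hwkmem i x _ v hv
    · exact absurd hv (Set.notMem_empty v)
  have httself : ∀ i x (hx : x ∈ B i), x ∈ tt i x := by
    intro i x hx
    rw [htt]; dsimp only; rw [dif_pos hx]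
    exact SimpleGraph.Walk.end_mem_support _
  have httc : ∀ i x (hx : x ∈ B i), c i ∈ tt i x := by
    intro i x hx
    rw [htt]; dsimp only; rw [dif_pos hx]
    exact SimpleGraph.Walk.start_mem_support _
  set D : Fin p → Set V := fun i => ⋃ x ∈ Ter i, tt i x with hD
  have hDB : ∀ i, D i ⊆ B i := by
    intro i v hv
    obtain ⟨x, -, hv⟩ := Set.mem_iUnion₂.mp hv
    exact httB i x hv
  have hDfin : ∀ i, (D i).Finite := fun i =>
    Set.Finite.biUnion (hTerFin i) (fun x _ => httfin i x)
  have hcD : ∀ i, c i ∈ D i := fun i =>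
    Set.mem_iUnion₂.mpr ⟨c i, hcTer i, httc i (c i) (hc i)⟩
  have hTerD : ∀ i x, x ∈ Ter i → x ∈ D i := fun i x hx =>
    Set.mem_iUnion₂.mpr ⟨x, hx, httself i x (hTerB i hx)⟩
  -- walks to the pivot within D i
  have hDwalk : ∀ i a, a ∈ D i → ∃ w : G.Walk a (c i), ∀ v ∈ w.support, v ∈ D i := by
    intro i a ha
    obtain ⟨x, hxT, ha'⟩ := Set.mem_iUnion₂.mp ha
    have hxB : x ∈ B i := hTerB i hxT
    rw [htt] at ha'; dsimp only at ha'; rw [dif_pos hxB] at ha'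
    have ha'' : a ∈ (wk i x hxB).support := ha'
    refine ⟨((wk i x hxB).takeUntil a ha'').reverse, ?_⟩
    intro v hv
    rw [SimpleGraph.Walk.support_reverse, List.mem_reverse] at hv
    have : v ∈ (wk i x hxB).support := SimpleGraph.Walk.support_takeUntil_subset _ ha'' hv
    refine Set.mem_iUnion₂.mpr ⟨x, hxT, ?_⟩
    rw [htt]; dsimp only; rw [dif_pos hxB]
    exact this
  -- the witness set
  refine ⟨⋃ i, D i, ?_, ?_, ?_, ?_, ?_⟩
  · intro v hv
    obtain ⟨i, hi⟩ := Set.mem_iUnion.mp hv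
    exact hsub i (hDB i hi)
  · exact Set.finite_iUnion hDfin
  · exact ⟨c ⟨0, hp⟩, Set.mem_iUnion.mpr ⟨⟨0, hp⟩, hcD _⟩⟩
  · -- walk-connectivity of the union
    intro a ha b hb
    obtain ⟨i, hai⟩ := Set.mem_iUnion.mp ha
    obtain ⟨j, hbj⟩ := Set.mem_iUnion.mp hb
    obtain ⟨w1, hw1⟩ := hDwalk i a hai
    obtain ⟨w5, hw5⟩ := hDwalk j b hbj
    by_cases hij : i = j
    · subst hij
      refine ⟨w1.append w5.reverse, ?_⟩
      intro v hv
      rcases mem_support_append' hv with hv | hv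
      · exact Set.mem_iUnion.mpr ⟨i, hw1 v hv⟩
      · rw [SimpleGraph.Walk.support_reverse, List.mem_reverse] at hv
        exact Set.mem_iUnion.mpr ⟨i, hw5 v hv⟩
    · obtain ⟨w2, hw2⟩ := hDwalk i (uu i j) (hTerD i _ (huuTer i j))
      obtain ⟨w4, hw4⟩ := hDwalk j (vv i j) (hTerD j _ (hvvTer i j))
      refine ⟨(w1.append w2.reverse).append
        (SimpleGraph.Walk.cons (huvadj i j hij) (w4.append w5.reverse)), ?_⟩
      intro v hv
      rcases mem_support_append' hv with hv | hv
      · rcases mem_support_append' hv with hv | hv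
        · exact Set.mem_iUnion.mpr ⟨i, hw1 v hv⟩
        · rw [SimpleGraph.Walk.support_reverse, List.mem_reverse] at hv
          exact Set.mem_iUnion.mpr ⟨i, hw2 v hv⟩
      · rw [SimpleGraph.Walk.support_cons] at hv
        rcases List.mem_cons.mp hv with hv | hv
        · exact Set.mem_iUnion.mpr ⟨i, hv ▸ hTerD i _ (huuTer i j)⟩
        · rcases mem_support_append' hv with hv | hv
          · exact Set.mem_iUnion.mpr ⟨j, hw4 v hv⟩
          · rw [SimpleGraph.Walk.support_reverse, List.mem_reverse] at hv
            exact Set.mem_iUnion.mpr ⟨j, hw5 v hv⟩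
  · -- the union carries a K_p minor
    rw [hcm_iff]
    refine ⟨D, fun i => Set.subset_iUnion D i, fun i => ⟨c i, hcD i⟩, ?_, ?_, ?_⟩
    · intro i x hx y hy
      obtain ⟨wa, hwa⟩ := hDwalk i x hx
      obtain ⟨wb, hwb⟩ := hDwalk i y hy
      refine ⟨wa.append wb.reverse, ?_⟩
      intro v hv
      rcases mem_support_append' hv with hv | hv
      · exact hwa v hv
      · rw [SimpleGraph.Walk.support_reverse, List.mem_reverse] at hv
        exact hwb v hv
    · intro i j hij
      exact (hdisj hij).mono (hDB i) (hDB j)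
    · intro i j hij
      exact ⟨uu i j, hTerD i _ (huuTer i j), vv i j, hTerD j _ (hvvTer i j), huvadj i j hij⟩
end Nice

section WJ
variable {V : Type*} {T : Type*} {G : SimpleGraph V} {Gt : SimpleGraph T} {W : T → Set V}

lemma mem_support_append'' {x y z v : T} {p : Gt.Walk x y} {q : Gt.Walk y z}
    (h : v ∈ (p.append q).support) : v ∈ p.support ∨ v ∈ q.support :=
  mem_support_append' h

lemma wconn_of_connected' {A : Set T} (h : (Gt.induce A).Connected) :
    ∀ x ∈ A, ∀ y ∈ A, ∃ w : Gt.Walk x y, ∀ v ∈ w.support, v ∈ A :=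
  wconn_of_connected h

lemma walkjoin (hbag3 : ∀ u v : V, G.Adj u v → ∃ t, u ∈ W t ∧ v ∈ W t)
    (hbag4 : ∀ v : V, (Gt.induce {t | v ∈ W t}).Connected)
    {A : Set V} : ∀ {x y : V} (w : G.Walk x y), (∀ v ∈ w.support, v ∈ A) →
    ∀ {s s' : T}, x ∈ W s → y ∈ W s' →
    ∃ q : Gt.Walk s s', ∀ m ∈ q.support, ∃ v ∈ A, v ∈ W m := by
  intro x y w
  induction w with
  | nil =>
    rename_i u
    intro hw s s' hs hs'
    obtain ⟨q, hq⟩ := wconn_of_connected' (hbag4 u) s hs s' hs'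
    exact ⟨q, fun m hm => ⟨u, hw u (SimpleGraph.Walk.start_mem_support _), hq m hm⟩⟩
  | cons hadj w' ih =>
    rename_i a b c
    intro hw s s' hs hs'
    obtain ⟨m0, hm0a, hm0b⟩ := hbag3 a b hadj
    obtain ⟨q1, hq1⟩ := wconn_of_connected' (hbag4 a) s hs m0 hm0a
    obtain ⟨q2, hq2⟩ := ih (fun v hv => hw v (by simp [SimpleGraph.Walk.support_cons, hv]))
      hm0b hs'
    refine ⟨q1.append q2, ?_⟩
    intro m hm
    rcases mem_support_append'' hm with hm | hm
    · exact ⟨a, hw a (SimpleGraph.Walk.start_mem_support _), hq1 m hm⟩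
    · exact hq2 m hm

lemma exists_Usmall (hbag3 : ∀ u v : V, G.Adj u v → ∃ t, u ∈ W t ∧ v ∈ W t)
    (hbag4 : ∀ v : V, (Gt.induce {t | v ∈ W t}).Connected)
    (tf : V → T) (htf : ∀ v, v ∈ W (tf v))
    {A : Set V} (hfin : A.Finite) (hne : A.Nonempty)
    (hwc : ∀ x ∈ A, ∀ y ∈ A, ∃ w : G.Walk x y, ∀ v ∈ w.support, v ∈ A) :
    ∃ C : Set T, C.Finite ∧ C.Nonempty ∧
      (∀ x ∈ C, ∀ y ∈ C, ∃ q : Gt.Walk x y, ∀ m ∈ q.support, m ∈ C) ∧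
      (∀ v ∈ A, tf v ∈ C) ∧ (∀ s ∈ C, ∃ v ∈ A, v ∈ W s) := by
  classical
  obtain ⟨cc, hcc⟩ := hne
  have hq : ∀ v, v ∈ A → ∃ q : Gt.Walk (tf cc) (tf v), ∀ m ∈ q.support, ∃ u ∈ A, u ∈ W m := by
    intro v hv
    obtain ⟨w, hw⟩ := hwc cc hcc v hv
    exact walkjoin hbag3 hbag4 w hw (htf cc) (htf v)
  choose qv hqv using hq
  set st : V → Set T := fun v => if hv : v ∈ A then {m | m ∈ (qv v hv).support} else ∅ with hst
  have hstfin : ∀ v, (st v).Finite := by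
    intro v
    rw [hst]; dsimp only; split
    · exact List.finite_toSet _
    · exact Set.finite_empty
  set C : Set T := ⋃ v ∈ A, st v with hC
  have hCfin : C.Finite := Set.Finite.biUnion hfin (fun v _ => hstfin v)
  have hstC : ∀ v (hv : v ∈ A), ∀ m ∈ (qv v hv).support, m ∈ C := by
    intro v hv m hm
    refine Set.mem_iUnion₂.mpr ⟨v, hv, ?_⟩
    rw [hst]; dsimp only; rw [dif_pos hv]; exact hm
  have htfC : ∀ v ∈ A, tf v ∈ C :=
    fun v hv => hstC v hv _ (SimpleGraph.Walk.end_mem_support _)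
  have hCwalk : ∀ a ∈ C, ∃ q : Gt.Walk a (tf cc), ∀ m ∈ q.support, m ∈ C := by
    intro a ha
    obtain ⟨v, hv, ha'⟩ := Set.mem_iUnion₂.mp ha
    rw [hst] at ha'; dsimp only at ha'; rw [dif_pos hv] at ha'
    have ha'' : a ∈ (qv v hv).support := ha'
    refine ⟨((qv v hv).takeUntil a ha'').reverse, ?_⟩
    intro m hm
    rw [SimpleGraph.Walk.support_reverse, List.mem_reverse] at hm
    exact hstC v hv m (SimpleGraph.Walk.support_takeUntil_subset _ ha'' hm)
  refine ⟨C, hCfin, ⟨tf cc, htfC cc hcc⟩, ?_, htfC, ?_⟩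
  · intro a ha b hb
    obtain ⟨q1, hq1⟩ := hCwalk a ha
    obtain ⟨q2, hq2⟩ := hCwalk b hb
    refine ⟨q1.append q2.reverse, ?_⟩
    intro m hm
    rcases mem_support_append'' hm with hm | hm
    · exact hq1 m hm
    · rw [SimpleGraph.Walk.support_reverse, List.mem_reverse] at hm
      exact hq2 m hm
  · intro s hs
    obtain ⟨v, hv, hs'⟩ := Set.mem_iUnion₂.mp hs
    rw [hst] at hs'; dsimp only at hs'; rw [dif_pos hv] at hs'
    exact hqv v hv s hs'
end WJ

end ErdosPosaAux

/-- For every `p`, `k`, `w` there exists `f_w(p,k)` such that every graph of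
tree-width `< w` either contains `k` disjoint `K_p` minors or has a set `X` of at most
`f_w(p,k)` vertices whose deletion kills all `K_p` minors. -/
theorem stmt0 (p k w : ℕ) :
    ∃ f : ℕ, ∀ (V : Type) (G : SimpleGraph V), TreewidthLt G w →
      HasDisjointCliqueMinors G p k ∨
      ∃ X : Set V, X.Finite ∧ X.ncard ≤ f ∧ ¬ HasCliqueMinor (G.induce Xᶜ) p := by
  classical
  rcases Nat.eq_zero_or_pos p with rfl | hp
  · -- p = 0 : every graph trivially contains k disjoint K₀ minors
    refine ⟨0, fun V G _ => Or.inl ⟨fun _ => (∅ : Set V), ?_, ?_⟩⟩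
    · intro i j _
      simp
    · intro i
      refine ⟨Fin.elim0, fun i => i.elim0, fun i => i.elim0, ?_, ?_⟩ <;>
        · intro a b _
          exact a.elim0
  · refine ⟨k * w, ?_⟩
    rintro V G ⟨T, Gt, Wb, ⟨htree, hbag2, hbag3, hbag4⟩, hbags⟩
    choose tf htf using hbag2
    -- the family of small connected bag-subtrees of finite nice K_p-minor witnesses
    set F : Set (Set T) := {C | ∃ A : Set V, A.Finite ∧ A.Nonempty ∧
      (∀ x ∈ A, ∀ y ∈ A, ∃ w : G.Walk x y, ∀ v ∈ w.support, v ∈ A) ∧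
      HasCliqueMinor (G.induce A) p ∧
      C.Finite ∧ C.Nonempty ∧
      (∀ x ∈ C, ∀ y ∈ C, ∃ q : Gt.Walk x y, ∀ m ∈ q.support, m ∈ C) ∧
      (∀ v ∈ A, tf v ∈ C) ∧ (∀ s ∈ C, ∃ v ∈ A, v ∈ Wb s)} with hF
    have hmemF : ∀ C ∈ F, C.Finite ∧ C.Nonempty ∧
        (∀ x ∈ C, ∀ y ∈ C, ∃ q : Gt.Walk x y, ∀ m ∈ q.support, m ∈ C) := by
      rintro C ⟨A, -, -, -, -, h5, h6, h7, -, -⟩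
      exact ⟨h5, h6, h7⟩
    rcases tree_EP Gt htree k F hmemF with ⟨g, hgF, hgdisj⟩ | ⟨N, hNcard, hNhits⟩
    · -- k disjoint K_p minors
      left
      have hEx : ∀ i : Fin k, ∃ A : Set V, A.Finite ∧ A.Nonempty ∧
          (∀ x ∈ A, ∀ y ∈ A, ∃ w : G.Walk x y, ∀ v ∈ w.support, v ∈ A) ∧
          HasCliqueMinor (G.induce A) p ∧
          (g i).Finite ∧ (g i).Nonempty ∧
          (∀ x ∈ g i, ∀ y ∈ g i, ∃ q : Gt.Walk x y, ∀ m ∈ q.support, m ∈ g i) ∧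
          (∀ v ∈ A, tf v ∈ g i) ∧ (∀ s ∈ g i, ∃ v ∈ A, v ∈ Wb s) := fun i => hgF i
      choose AA h1 h2 h3 h4 h5 h6 h7 h8 h9 using hEx
      refine ⟨AA, ?_, fun i => h4 i⟩
      intro i j hij
      rw [Set.disjoint_left]
      intro v hvi hvj
      have h1' : tf v ∈ g i := h8 i v hvi
      have h2' : tf v ∈ g j := h8 j v hvj
      exact Set.disjoint_left.mp (hgdisj hij) h1' h2'
    · -- small hitting set
      right
      set X : Set V := ⋃ t ∈ (N : Set T), Wb t with hX
      have hXfin : X.Finite := Set.Finite.biUnion N.finite_toSet (fun t _ => (hbags t).1)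
      have hXcard : ∀ M : Finset T, (⋃ t ∈ (M : Set T), Wb t).ncard ≤ M.card * w := by
        intro M
        induction M using Finset.induction with
        | empty => simp
        | @insert a M ha ih =>
          rw [Finset.coe_insert, Set.biUnion_insert]
          calc (Wb a ∪ ⋃ t ∈ (M : Set T), Wb t).ncard
              ≤ (Wb a).ncard + (⋃ t ∈ (M : Set T), Wb t).ncard :=
                Set.ncard_union_le _ _
            _ ≤ w + M.card * w := by
                have := (hbags a).2
                have := ih
                omega
            _ ≤ (insert a M).card * w := by
                rw [Finset.card_insert_of_notMem ha]
                ring_nf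
                omega
      refine ⟨X, hXfin, ?_, ?_⟩
      · calc X.ncard ≤ N.card * w := hXcard N
          _ ≤ k * w := Nat.mul_le_mul_right w (by omega)
      · intro hcm
        obtain ⟨A, hAsub, hAfin, hAne, hAwc, hAcm⟩ := exists_nice G p hp Xᶜ hcm
        obtain ⟨C, hCfin, hCne, hCwc, hCtf, hCbag⟩ :=
          exists_Usmall (G := G) (Gt := Gt) (W := Wb) hbag3 hbag4 tf htf hAfin hAne hAwc
        have hCF : C ∈ F := ⟨A, hAfin, hAne, hAwc, hAcm, hCfin, hCne, hCwc, hCtf, hCbag⟩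
        obtain ⟨s, hsN, hsC⟩ := hNhits C hCF
        obtain ⟨v, hvA, hvW⟩ := hCbag s hsC
        have hvX : v ∈ X := Set.mem_biUnion hsN hvW
        exact hAsub hvA hvX
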